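/- For any n and any function f: F_q^n → [0,1], Σ_{h ≠ 0} f̂(h) f̂(2h) f̂(3h) f̂(−6h) ≤ Σ_{h ≠ 0} |f̂(h)|² |f̂(2h)|², where the sums run over nonzero characters h of F_q^n and q is a prime power coprime to 6. Consequently Σ_{h≠0} [2|f̂(h)|²|f̂(2h)|² + |f̂(h)|²|f̂(3h)|² + 2 f̂(h)f̂(2h)f̂(3h)f̂(−6h)] ≥ 0. -/

import Mathlib

open scoped BigOperators Classical

/-- The Fourier transform of `f : F^n → ℝ` at the frequency `r ∈ F^n`, with respect to a
fixed primitive additive character `ψ` of the finite field `F` (for `F = F_q`, the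
standard choice is `ψ = e_p(Tr(·))`, giving `f̂(r) = E_x f(x) e_p(−Tr(r·x))`). -/
noncomputable def fhat {F : Type*} [Field F] [Fintype F] (ψ : AddChar F ℂ) {n : ℕ}
    (f : (Fin n → F) → ℝ) (r : Fin n → F) : ℂ :=
  (∑ x : Fin n → F, (f x : ℂ) * ψ (-(∑ i, r i * x i))) / (Fintype.card F : ℂ) ^ n

lemma fhat_neg {F : Type*} [Field F] [Fintype F] (ψ : AddChar F ℂ) {n : ℕ}
    (f : (Fin n → F) → ℝ) (r : Fin n → F) :
    fhat ψ f (-r) = starRingEnd ℂ (fhat ψ f r) := by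
  simp only [fhat, map_div₀, map_sum, map_mul, Complex.conj_ofReal, map_pow,
    Complex.conj_natCast]
  congr 1
  refine Finset.sum_congr rfl fun x _ => ?_
  rw [← AddChar.map_neg_eq_conj, neg_neg]
  congr 2
  simp [neg_mul]

lemma abs_fhat_neg {F : Type*} [Field F] [Fintype F] (ψ : AddChar F ℂ) {n : ℕ}
    (f : (Fin n → F) → ℝ) (r : Fin n → F) :
    ‖fhat ψ f (-r)‖ = ‖fhat ψ f r‖ := by
  rw [fhat_neg]; exact Complex.norm_conj _

/-- Example 4.5: for a prime power `q` coprime to 6 and `f : F^n → [0,1]`,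
Cauchy–Schwarz together with the substitution `h ↦ 3h` gives
`Σ_{h≠0} f̂(h)f̂(2h)f̂(3h)f̂(−6h) ≤ Σ_{h≠0} |f̂(h)|²|f̂(2h)|²` (the left sum being real),
and consequently
`Σ_{h≠0} [2|f̂(h)|²|f̂(2h)|² + |f̂(h)|²|f̂(3h)|² + 2 f̂(h)f̂(2h)f̂(3h)f̂(−6h)] ≥ 0`. -/
theorem cauchy_schwarz_fourier_bound
    {F : Type*} [Field F] [Fintype F] (hq : Nat.Coprime (Fintype.card F) 6)
    (ψ : AddChar F ℂ) (hψ : ψ.IsPrimitive)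
    (n : ℕ) (f : (Fin n → F) → ℝ) (hf : ∀ x, 0 ≤ f x ∧ f x ≤ 1) :
    (∑ h ∈ Finset.univ.filter (fun h : Fin n → F => h ≠ 0),
        fhat ψ f h * fhat ψ f ((2 : F) • h) * fhat ψ f ((3 : F) • h) *
          fhat ψ f ((-6 : F) • h)).re ≤
      (∑ h ∈ Finset.univ.filter (fun h : Fin n → F => h ≠ 0),
        (‖fhat ψ f h‖) ^ 2 * (‖fhat ψ f ((2 : F) • h)‖) ^ 2) ∧
    0 ≤
      (∑ h ∈ Finset.univ.filter (fun h : Fin n → F => h ≠ 0),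
        (2 * (‖fhat ψ f h‖) ^ 2 * (‖fhat ψ f ((2 : F) • h)‖) ^ 2 +
          (‖fhat ψ f h‖) ^ 2 * (‖fhat ψ f ((3 : F) • h)‖) ^ 2)) +
      2 * (∑ h ∈ Finset.univ.filter (fun h : Fin n → F => h ≠ 0),
        fhat ψ f h * fhat ψ f ((2 : F) • h) * fhat ψ f ((3 : F) • h) *
          fhat ψ f ((-6 : F) • h)).re := by
  classical
  set s : Finset (Fin n → F) := Finset.univ.filter (fun h : Fin n → F => h ≠ 0) with hs
  -- 3 ≠ 0 in F
  have h3 : (3 : F) ≠ 0 := by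
    intro h30
    haveI := ringChar.charP F
    have hdvd : ringChar F ∣ 3 := (CharP.cast_eq_zero_iff F (ringChar F) 3).mp (by exact_mod_cast h30)
    have hp : (ringChar F).Prime := CharP.char_is_prime F (ringChar F)
    have hp3 : ringChar F = 3 := ((Nat.prime_dvd_prime_iff_eq hp (by norm_num)).mp hdvd)
    obtain ⟨m, _, hcard⟩ := FiniteField.card F (ringChar F)
    have h3card : (3 : ℕ) ∣ Fintype.card F := by
      rw [hcard, hp3]; exact dvd_pow_self 3 m.pos.ne'
    have : (3 : ℕ) ∣ 1 := hq ▸ Nat.dvd_gcd h3card (by norm_num)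
    norm_num at this
  set A : ℝ := ∑ h ∈ s,
      (‖fhat ψ f h‖) ^ 2 * (‖fhat ψ f ((2 : F) • h)‖) ^ 2 with hA
  -- substitution h ↦ 3h
  have hsub : ∑ h ∈ s,
      (‖fhat ψ f ((3 : F) • h)‖ * ‖fhat ψ f ((-6 : F) • h)‖) ^ 2 = A := by
    rw [hA]
    refine Finset.sum_nbij' (fun h => (3 : F) • h) (fun g => (3 : F)⁻¹ • g) ?_ ?_ ?_ ?_ ?_
    · intro a ha
      simp only [hs, Finset.mem_filter, Finset.mem_univ, true_and] at ha ⊢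
      exact smul_ne_zero h3 ha
    · intro a ha
      simp only [hs, Finset.mem_filter, Finset.mem_univ, true_and] at ha ⊢
      exact smul_ne_zero (inv_ne_zero h3) ha
    · intro a _; rw [smul_smul, inv_mul_cancel₀ h3, one_smul]
    · intro a _; rw [smul_smul, mul_inv_cancel₀ h3, one_smul]
    · intro a _
      have h2 : (2 : F) • ((3 : F) • a) = (6 : F) • a := by
        rw [smul_smul]; norm_num
      have h6 : (-6 : F) • a = -((6 : F) • a) := by
        rw [show ((-6 : F)) = -(6 : F) by norm_num, neg_smul]
      rw [mul_pow, h2, h6, abs_fhat_neg]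
  -- key bound via Cauchy–Schwarz
  have key : ∑ h ∈ s, ‖fhat ψ f h * fhat ψ f ((2 : F) • h) * fhat ψ f ((3 : F) • h) *
      fhat ψ f ((-6 : F) • h)‖ ≤ A := by
    have hcs := Finset.sum_mul_sq_le_sq_mul_sq s
      (fun h => ‖fhat ψ f h‖ * ‖fhat ψ f ((2 : F) • h)‖)
      (fun h => ‖fhat ψ f ((3 : F) • h)‖ * ‖fhat ψ f ((-6 : F) • h)‖)
    rw [hsub] at hcs
    have hAeq : (∑ h ∈ s, (‖fhat ψ f h‖ * ‖fhat ψ f ((2 : F) • h)‖) ^ 2)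
        = A := by
      rw [hA]; exact Finset.sum_congr rfl fun h _ => by ring
    rw [hAeq] at hcs
    have hterm : ∀ h ∈ s, ‖fhat ψ f h * fhat ψ f ((2 : F) • h) *
        fhat ψ f ((3 : F) • h) * fhat ψ f ((-6 : F) • h)‖
        = (‖fhat ψ f h‖ * ‖fhat ψ f ((2 : F) • h)‖) *
          (‖fhat ψ f ((3 : F) • h)‖ * ‖fhat ψ f ((-6 : F) • h)‖) := by
      intro h _; simp [map_mul]; ring
    rw [Finset.sum_congr rfl hterm]
    have hnn : (0:ℝ) ≤ ∑ h ∈ s, (‖fhat ψ f h‖ * ‖fhat ψ f ((2 : F) • h)‖) *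
        (‖fhat ψ f ((3 : F) • h)‖ * ‖fhat ψ f ((-6 : F) • h)‖) :=
      Finset.sum_nonneg fun h _ => mul_nonneg (mul_nonneg (norm_nonneg _)
        (norm_nonneg _)) (mul_nonneg (norm_nonneg _) (norm_nonneg _))
    have hAnn : (0:ℝ) ≤ A := by
      rw [hA]; exact Finset.sum_nonneg fun h _ => mul_nonneg (sq_nonneg _) (sq_nonneg _)
    nlinarith [hcs, hnn, hAnn]
  have habs : ‖∑ h ∈ s, fhat ψ f h * fhat ψ f ((2 : F) • h) * fhat ψ f ((3 : F) • h) *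
      fhat ψ f ((-6 : F) • h)‖ ≤ A :=
    le_trans (norm_sum_le _ _) key
  have hre : |(∑ h ∈ s, fhat ψ f h * fhat ψ f ((2 : F) • h) * fhat ψ f ((3 : F) • h) *
      fhat ψ f ((-6 : F) • h)).re| ≤ A :=
    le_trans (Complex.abs_re_le_norm _) habs
  have hB : (0:ℝ) ≤ ∑ h ∈ s,
      (‖fhat ψ f h‖) ^ 2 * (‖fhat ψ f ((3 : F) • h)‖) ^ 2 :=
    Finset.sum_nonneg fun h _ => mul_nonneg (sq_nonneg _) (sq_nonneg _)
  have hAnn : (0:ℝ) ≤ A := by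
    rw [hA]; exact Finset.sum_nonneg fun h _ => mul_nonneg (sq_nonneg _) (sq_nonneg _)
  constructor
  · have := abs_le.mp hre
    linarith [this.2]
  · have hsplit : ∑ h ∈ s,
        (2 * (‖fhat ψ f h‖) ^ 2 * (‖fhat ψ f ((2 : F) • h)‖) ^ 2 +
          (‖fhat ψ f h‖) ^ 2 * (‖fhat ψ f ((3 : F) • h)‖) ^ 2)
        = 2 * A + ∑ h ∈ s,
          (‖fhat ψ f h‖) ^ 2 * (‖fhat ψ f ((3 : F) • h)‖) ^ 2 := by
      rw [Finset.sum_add_distrib, hA, Finset.mul_sum]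
      congr 1
      exact Finset.sum_congr rfl fun h _ => by ring
    rw [hsplit]
    have := abs_le.mp hre
    linarith [this.1]
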